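/- Let n ≥ 2, N = n(n−1)/2, and let K̂ ∈ 𝒮_c have unit Frobenius norm. Fix ρ ∈ (0,1) and let T_c = H·T_{i;jk}·H for a triplet mask T_{i;jk}, with Δ_K̂ := ⟨T_c, K̂⟩_F > 0. Suppose L̂ = ρ·K̂ + E, where E is a zero-mean Gaussian random element of the (N−1)-dimensional subspace {K̂}^⊥ ∩ 𝒮_c with covariance σ²·Id on that subspace, where σ² = (1−ρ²)/(N−1). Then P[⟨T_c, L̂⟩_F > 0] ≥ Φ( ρ·Δ_K̂ / √( (12/(N−1))·(1−ρ) ) ). -/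

import Mathlib

open MeasureTheory ProbabilityTheory Matrix

noncomputable section

/-- Frobenius inner product of real matrices: `⟨A, B⟩_F = tr(Aᵀ B)`. -/
def finner {m k : Type*} [Fintype m] [Fintype k] (A B : Matrix m k ℝ) : ℝ :=
  (Aᵀ * B).trace

/-- Frobenius norm. -/
def fnorm {m k : Type*} [Fintype m] [Fintype k] (A : Matrix m k ℝ) : ℝ :=
  Real.sqrt (finner A A)

/-- `M` lies in `𝒮_c`: it is symmetric and `M 𝟙 = 0`. -/
def centeredSym {n : ℕ} (M : Matrix (Fin n) (Fin n) ℝ) : Prop :=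
  M.IsSymm ∧ M *ᵥ (fun _ => (1 : ℝ)) = 0

/-- Standard normal CDF `Φ`. -/
def Phi (x : ℝ) : ℝ := ((gaussianReal 0 1) (Set.Iic x)).toReal

/-- `E` is a zero-mean Gaussian random element supported on the subspace of matrices described by
the membership predicate `W`, with covariance `σ2 • Id` on that subspace: `E` takes values in `W`
and every linear functional `⟨T, ·⟩_F` with `T ∈ W` has the centered Gaussian law of variance
`σ2 * ‖T‖_F²`. -/
def IsIsoGaussianOn {n : ℕ} {Ω : Type*} [MeasurableSpace Ω] (P : Measure Ω)
    (E : Ω → Matrix (Fin n) (Fin n) ℝ) (W : Matrix (Fin n) (Fin n) ℝ → Prop) (σ2 : ℝ) : Prop :=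
  (∀ ω, W (E ω)) ∧
  ∀ T : Matrix (Fin n) (Fin n) ℝ, W T →
    Measure.map (fun ω => finner T (E ω)) P
      = gaussianReal 0 (Real.toNNReal (σ2 * (fnorm T) ^ 2))

/-- The centering matrix `H = I − (1/n) 𝟙 𝟙ᵀ`. -/
def Hmat (n : ℕ) : Matrix (Fin n) (Fin n) ℝ :=
  1 - ((n : ℝ)⁻¹) • Matrix.of (fun _ _ => (1 : ℝ))

/-- The squared-Euclidean triplet mask `T_{i;jk}`. -/
def tripletMask {n : ℕ} (i j k : Fin n) : Matrix (Fin n) (Fin n) ℝ :=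
  Matrix.of fun a b =>
    if a = j ∧ b = j then 1
    else if a = k ∧ b = k then -1
    else if (a = i ∧ b = j) ∨ (a = j ∧ b = i) then -1
    else if (a = i ∧ b = k) ∨ (a = k ∧ b = i) then 1
    else 0

/-- The cosine triplet mask `T^cos_{i;jk}`. -/
def cosMask {n : ℕ} (i j k : Fin n) : Matrix (Fin n) (Fin n) ℝ :=
  Matrix.of fun a b =>
    if (a = i ∧ b = j) ∨ (a = j ∧ b = i) then 1 / 2
    else if (a = i ∧ b = k) ∨ (a = k ∧ b = i) then -(1 / 2)
    else 0

/-! ### Auxiliary lemmas -/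

lemma finner_def' {m k : Type*} [Fintype m] [Fintype k] (A B : Matrix m k ℝ) :
    finner A B = ∑ i, ∑ j, A j i * B j i := by
  simp [finner, Matrix.trace, Matrix.mul_apply, Matrix.diag]

lemma finner_comm {m k : Type*} [Fintype m] [Fintype k] (A B : Matrix m k ℝ) :
    finner A B = finner B A := by
  simp [finner_def', mul_comm]

lemma finner_add_right {m k : Type*} [Fintype m] [Fintype k] (A B C : Matrix m k ℝ) :
    finner A (B + C) = finner A B + finner A C := by
  simp [finner_def', mul_add, Finset.sum_add_distrib]

lemma finner_smul_right {m k : Type*} [Fintype m] [Fintype k] (c : ℝ) (A B : Matrix m k ℝ) :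
    finner A (c • B) = c * finner A B := by
  simp [finner_def', Finset.mul_sum, mul_left_comm]

lemma finner_sub_right {m k : Type*} [Fintype m] [Fintype k] (A B C : Matrix m k ℝ) :
    finner A (B - C) = finner A B - finner A C := by
  simp [finner_def', mul_sub, Finset.sum_sub_distrib]

lemma finner_add_left {m k : Type*} [Fintype m] [Fintype k] (A B C : Matrix m k ℝ) :
    finner (A + B) C = finner A C + finner B C := by
  rw [finner_comm, finner_add_right, finner_comm C A, finner_comm C B]

lemma finner_smul_left {m k : Type*} [Fintype m] [Fintype k] (c : ℝ) (A B : Matrix m k ℝ) :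
    finner (c • A) B = c * finner A B := by
  rw [finner_comm, finner_smul_right, finner_comm B A]

lemma finner_sub_left {m k : Type*} [Fintype m] [Fintype k] (A B C : Matrix m k ℝ) :
    finner (A - B) C = finner A C - finner B C := by
  rw [finner_comm, finner_sub_right, finner_comm C A, finner_comm C B]

lemma finner_self_nonneg {m k : Type*} [Fintype m] [Fintype k] (A : Matrix m k ℝ) :
    0 ≤ finner A A := by
  rw [finner_def']
  exact Finset.sum_nonneg fun i _ => Finset.sum_nonneg fun j _ => mul_self_nonneg _

lemma Hmat_transpose (n : ℕ) : (Hmat n)ᵀ = Hmat n := by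
  ext a b
  simp [Hmat, Matrix.one_apply, eq_comm]

lemma Hmat_mul_Hmat {n : ℕ} (hn : 2 ≤ n) : Hmat n * Hmat n = Hmat n := by
  have hn0 : (n : ℝ) ≠ 0 := by positivity
  have hJ : (Matrix.of (fun _ _ => (1:ℝ)) : Matrix (Fin n) (Fin n) ℝ) *
      Matrix.of (fun _ _ => (1:ℝ)) = (n : ℝ) • Matrix.of (fun _ _ => (1:ℝ)) := by
    ext a b
    simp [Matrix.mul_apply]
  simp only [Hmat, Matrix.sub_mul, Matrix.mul_sub, Matrix.one_mul, Matrix.mul_one,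
    Matrix.smul_mul, Matrix.mul_smul, hJ, smul_smul, inv_mul_cancel₀ hn0, one_smul,
    smul_zero, sub_zero, smul_sub]
  abel

lemma Hmat_mulVec_one {n : ℕ} (hn : 2 ≤ n) :
    Hmat n *ᵥ (fun _ => (1:ℝ)) = 0 := by
  have hn0 : (n : ℝ) ≠ 0 := by positivity
  funext x
  simp [Hmat, Matrix.mulVec, dotProduct, Matrix.one_apply, Matrix.sub_apply,
    Finset.sum_ite_eq, mul_inv_cancel₀ hn0, Finset.sum_sub_distrib]

lemma tripletMask_transpose {n : ℕ} (i j k : Fin n) :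
    (tripletMask i j k)ᵀ = tripletMask i j k := by
  ext a b
  show (tripletMask i j k) b a = (tripletMask i j k) a b
  simp only [tripletMask, Matrix.of_apply]
  have h1 : (b = j ∧ a = j) = (a = j ∧ b = j) := eq_iff_iff.mpr and_comm
  have h2 : (b = k ∧ a = k) = (a = k ∧ b = k) := eq_iff_iff.mpr and_comm
  have h3 : ((b = i ∧ a = j) ∨ (b = j ∧ a = i)) = ((a = i ∧ b = j) ∨ (a = j ∧ b = i)) :=
    eq_iff_iff.mpr ⟨fun h => h.elim (fun h => Or.inr ⟨h.2, h.1⟩) (fun h => Or.inl ⟨h.2, h.1⟩),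
      fun h => h.elim (fun h => Or.inr ⟨h.2, h.1⟩) (fun h => Or.inl ⟨h.2, h.1⟩)⟩
  have h4 : ((b = i ∧ a = k) ∨ (b = k ∧ a = i)) = ((a = i ∧ b = k) ∨ (a = k ∧ b = i)) :=
    eq_iff_iff.mpr ⟨fun h => h.elim (fun h => Or.inr ⟨h.2, h.1⟩) (fun h => Or.inl ⟨h.2, h.1⟩),
      fun h => h.elim (fun h => Or.inr ⟨h.2, h.1⟩) (fun h => Or.inl ⟨h.2, h.1⟩)⟩
  simp only [h1, h2, h3, h4]

lemma tripletMask_sq {n : ℕ} (i j k : Fin n) (hij : i ≠ j) (hik : i ≠ k) (hjk : j ≠ k)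
    (a b : Fin n) :
    tripletMask i j k a b * tripletMask i j k a b =
      (if a = j ∧ b = j then 1 else 0) + (if a = k ∧ b = k then 1 else 0)
      + (if a = i ∧ b = j then 1 else 0) + (if a = j ∧ b = i then 1 else 0)
      + (if a = i ∧ b = k then 1 else 0) + (if a = k ∧ b = i then 1 else 0) := by
  simp only [tripletMask, Matrix.of_apply]
  split_ifs <;> simp_all

lemma finner_tripletMask_self {n : ℕ} (i j k : Fin n) (hij : i ≠ j) (hik : i ≠ k)
    (hjk : j ≠ k) : finner (tripletMask i j k) (tripletMask i j k) = 6 := by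
  rw [finner_def']
  have h : ∀ c : Fin n, ∀ d : Fin n,
      tripletMask i j k d c * tripletMask i j k d c =
      (if d = j ∧ c = j then 1 else 0) + (if d = k ∧ c = k then 1 else 0)
      + (if d = i ∧ c = j then 1 else 0) + (if d = j ∧ c = i then 1 else 0)
      + (if d = i ∧ c = k then 1 else 0) + (if d = k ∧ c = i then 1 else 0) :=
    fun c d => tripletMask_sq i j k hij hik hjk d c
  simp only [h, Finset.sum_add_distrib]
  have hsum : ∀ (p q : Fin n), (∑ c : Fin n, ∑ d : Fin n,
      (if d = p ∧ c = q then (1:ℝ) else 0)) = 1 := by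
    intro p q
    simp [ite_and, Finset.sum_ite_eq]
  simp only [hsum]
  norm_num

lemma Phi_le_one (x : ℝ) : Phi x ≤ 1 := by
  rw [Phi]
  have := prob_le_one (μ := gaussianReal 0 1) (s := Set.Iic x)
  exact ENNReal.toReal_le_of_le_ofReal zero_le_one (by simpa using this)

lemma Phi_mono {x y : ℝ} (h : x ≤ y) : Phi x ≤ Phi y := by
  rw [Phi, Phi]
  exact ENNReal.toReal_mono (measure_ne_top _ _) (measure_mono (Set.Iic_subset_Iic.mpr h))

lemma gaussian_singleton {v : NNReal} (hv : v ≠ 0) (x : ℝ) : gaussianReal 0 v {x} = 0 :=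
  gaussianReal_absolutelyContinuous 0 hv (by simp)

lemma lemA (v : NNReal) (x a : ℝ) (hx : 0 < x) (hav : a * Real.sqrt v ≤ x) :
    Phi a ≤ ((gaussianReal 0 v) (Set.Ioi (-x))).toReal := by
  by_cases hv : v = 0
  · subst hv
    rw [gaussianReal_zero_var]
    rw [Measure.dirac_apply' _ measurableSet_Ioi]
    simp only [Set.indicator_of_mem (by simpa using neg_lt_zero.mpr hx : (0:ℝ) ∈ Set.Ioi (-x))]
    simpa using Phi_le_one a
  · have hvpos : (0:ℝ) < (v:ℝ) := by positivity
    have hsv : (0:ℝ) < Real.sqrt v := Real.sqrt_pos.mpr hvpos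
    have hsym : gaussianReal 0 v (Set.Ioi (-x)) = gaussianReal 0 v (Set.Iio x) := by
      have hmap := gaussianReal_map_const_mul (μ := 0) (v := v) (-1 : ℝ)
      have h1 : (NNReal.mk ((-1:ℝ)^2) (sq_nonneg _)) = 1 := by
        ext; norm_num
      rw [h1, one_mul] at hmap
      have hpre : ((-1 : ℝ) * ·) ⁻¹' (Set.Iio x) = Set.Ioi (-x) := by
        ext y
        simp only [Set.mem_preimage, Set.mem_Iio, Set.mem_Ioi]
        constructor <;> intro <;> linarith
      calc gaussianReal 0 v (Set.Ioi (-x))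
          = gaussianReal 0 v (((-1 : ℝ) * ·) ⁻¹' (Set.Iio x)) := by rw [hpre]
        _ = ((gaussianReal 0 v).map ((-1 : ℝ) * ·)) (Set.Iio x) := by
            rw [Measure.map_apply (measurable_const_mul _) measurableSet_Iio]
        _ = gaussianReal 0 v (Set.Iio x) := by rw [hmap]; norm_num
    have hIic : gaussianReal 0 v (Set.Iio x) = gaussianReal 0 v (Set.Iic x) := by
      have h2 : Set.Iic x = Set.Iio x ∪ {x} := by
        ext y; simp [le_iff_lt_or_eq]
      rw [h2, measure_union (by simp) (measurableSet_singleton x),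
        gaussian_singleton hv, add_zero]
    have hstd : gaussianReal 0 v (Set.Iic x) = gaussianReal 0 1 (Set.Iic (x / Real.sqrt v)) := by
      have hmap := gaussianReal_map_const_mul (μ := 0) (v := 1) (Real.sqrt v)
      have h1 : (NNReal.mk ((Real.sqrt v)^2) (sq_nonneg _)) = v := by
        ext; simp [Real.sq_sqrt hvpos.le]
      rw [h1, mul_one] at hmap
      have hpre : ((Real.sqrt v : ℝ) * ·) ⁻¹' (Set.Iic x) = Set.Iic (x / Real.sqrt v) := by
        ext y
        simp only [Set.mem_preimage, Set.mem_Iic]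
        rw [le_div_iff₀ hsv, mul_comm]
      calc gaussianReal 0 v (Set.Iic x)
          = ((gaussianReal 0 1).map ((Real.sqrt v : ℝ) * ·)) (Set.Iic x) := by
            rw [hmap]; norm_num
        _ = gaussianReal 0 1 (Set.Iic (x / Real.sqrt v)) := by
            rw [Measure.map_apply (measurable_const_mul _) measurableSet_Iic, hpre]
    rw [hsym, hIic, hstd]
    exact Phi_mono ((le_div_iff₀ hsv).mpr hav)

/-- universal lower bound, squared-Euclidean triplet mask. -/
theorem stmt3 {n : ℕ} (hn : 2 ≤ n) (N : ℕ) (hN : N = n * (n - 1) / 2)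
    {Ω : Type*} [MeasurableSpace Ω] (P : Measure Ω) [IsProbabilityMeasure P]
    (Khat : Matrix (Fin n) (Fin n) ℝ) (hKc : centeredSym Khat) (hKnorm : fnorm Khat = 1)
    (ρ : ℝ) (hρ : ρ ∈ Set.Ioo (0 : ℝ) 1)
    (i j k : Fin n) (hij : i ≠ j) (hik : i ≠ k) (hjk : j ≠ k)
    (Tc : Matrix (Fin n) (Fin n) ℝ) (hTc : Tc = Hmat n * tripletMask i j k * Hmat n)
    (hΔ : 0 < finner Tc Khat)
    (E : Ω → Matrix (Fin n) (Fin n) ℝ)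
    (hE : IsIsoGaussianOn P E
      (fun M => centeredSym M ∧ finner Khat M = 0) ((1 - ρ ^ 2) / ((N : ℝ) - 1)))
    (Lhat : Ω → Matrix (Fin n) (Fin n) ℝ) (hL : ∀ ω, Lhat ω = ρ • Khat + E ω) :
    (P {ω | 0 < finner Tc (Lhat ω)}).toReal
      ≥ Phi (ρ * finner Tc Khat / Real.sqrt ((12 / ((N : ℝ) - 1)) * (1 - ρ))) := by
  obtain ⟨hρ0, hρ1⟩ := hρ
  set T := tripletMask i j k with hT
  set Δ : ℝ := finner Tc Khat with hΔdef
  set σ2 : ℝ := (1 - ρ ^ 2) / ((N : ℝ) - 1) with hσ2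
  set s : ℝ := (12 / ((N : ℝ) - 1)) * (1 - ρ) with hs
  have hHH := Hmat_mul_Hmat hn
  -- basic matrix facts
  have hTsymm : Tᵀ = T := tripletMask_transpose i j k
  have hTcsymm : Tcᵀ = Tc := by
    rw [hTc]
    simp only [Matrix.transpose_mul, Hmat_transpose, hTsymm]
    rw [Matrix.mul_assoc]
  have hTcH : Tc * Hmat n = Tc := by
    rw [hTc, Matrix.mul_assoc, hHH]
  have hTc1 : Tc *ᵥ (fun _ => (1:ℝ)) = 0 := by
    rw [hTc, ← Matrix.mulVec_mulVec, ← Matrix.mulVec_mulVec, Hmat_mulVec_one hn,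
      Matrix.mulVec_zero, Matrix.mulVec_zero]
  -- ‖Tc‖² = ⟨T, Tc⟩ and Pythagoras
  have hkey : finner Tc Tc = finner T Tc := by
    have e1 : Tc * Tc = Hmat n * (T * Tc) := by
      nth_rewrite 1 [hTc]
      rw [hTc]
      simp only [← Matrix.mul_assoc]
      rw [show Hmat n * T * Hmat n * Hmat n = Hmat n * T * Hmat n from by
        rw [Matrix.mul_assoc, hHH]]
    calc finner Tc Tc = (Tc * Tc).trace := by rw [finner, hTcsymm]
      _ = (Hmat n * (T * Tc)).trace := by rw [e1]
      _ = ((T * Tc) * Hmat n).trace := by rw [Matrix.trace_mul_comm]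
      _ = (T * (Tc * Hmat n)).trace := by rw [Matrix.mul_assoc]
      _ = (T * Tc).trace := by rw [hTcH]
      _ = finner T Tc := by rw [finner, hTsymm]
  have hT6 : finner T T = 6 := finner_tripletMask_self i j k hij hik hjk
  have hTc6 : finner Tc Tc ≤ 6 := by
    have h0 : 0 ≤ finner (T - Tc) (T - Tc) := finner_self_nonneg _
    rw [finner_sub_left, finner_sub_right, finner_sub_right] at h0
    have hcomm : finner Tc T = finner T Tc := finner_comm _ _
    linarith [hkey, hT6, hcomm, h0]
  -- the orthogonal part
  set Tp : Matrix (Fin n) (Fin n) ℝ := Tc - Δ • Khat with hTp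
  have hKK : finner Khat Khat = 1 := by
    have := hKnorm
    rw [fnorm, Real.sqrt_eq_one] at this
    exact this
  have hKTc : finner Khat Tc = Δ := by rw [finner_comm]
  have hTpK : finner Khat Tp = 0 := by
    rw [hTp, finner_sub_right, finner_smul_right, hKK, hKTc]
    ring
  have hTpW : centeredSym Tp ∧ finner Khat Tp = 0 := by
    refine ⟨⟨?_, ?_⟩, hTpK⟩
    · show Tpᵀ = Tp
      rw [hTp, Matrix.transpose_sub, Matrix.transpose_smul, hTcsymm, hKc.1]
    · rw [hTp, Matrix.sub_mulVec, Matrix.smul_mulVec, hTc1, hKc.2]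
      simp
  have hTpTp : finner Tp Tp = finner Tc Tc - Δ ^ 2 := by
    rw [hTp, finner_sub_left, finner_sub_right, finner_sub_right, finner_smul_left,
      finner_smul_right, finner_smul_left, finner_smul_right, hKK, hKTc, ← hΔdef]
    ring
  have hTp6 : finner Tp Tp ≤ 6 := by nlinarith [sq_nonneg Δ]
  have hTp0 : 0 ≤ finner Tp Tp := finner_self_nonneg _
  -- law of the linear functional
  have hlaw := hE.2 Tp hTpW
  have hf : AEMeasurable (fun ω => finner Tp (E ω)) P :=
    aemeasurable_of_map_neZero (by rw [hlaw]; infer_instance)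
  -- pointwise decomposition
  have hpt : ∀ ω, finner Tc (Lhat ω) = ρ * Δ + finner Tp (E ω) := by
    intro ω
    have hKE : finner Khat (E ω) = 0 := (hE.1 ω).2
    have : finner Tp (E ω) = finner Tc (E ω) - Δ * finner Khat (E ω) := by
      rw [hTp, finner_sub_left, finner_smul_left]
    rw [hL ω, finner_add_right, finner_smul_right, this, hKE]
    ring
  have hρΔ : 0 < ρ * Δ := mul_pos hρ0 hΔ
  have hset : {ω | 0 < finner Tc (Lhat ω)}
      = (fun ω => finner Tp (E ω)) ⁻¹' Set.Ioi (-(ρ * Δ)) := by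
    ext ω
    simp only [Set.mem_setOf_eq, Set.mem_preimage, Set.mem_Ioi, hpt ω]
    constructor <;> intro <;> linarith
  rw [hset, ← Measure.map_apply_of_aemeasurable hf measurableSet_Ioi, hlaw]
  -- reduce to the analytic lemma
  rw [ge_iff_le]
  apply lemA _ _ _ hρΔ
  -- the variance comparison
  have hN1 : 1 ≤ N := by
    subst hN
    have h2 : 2 * 1 ≤ n * (n - 1) := Nat.mul_le_mul hn (by omega)
    omega
  have hfn : fnorm Tp ^ 2 = finner Tp Tp := Real.sq_sqrt hTp0
  have hvs : σ2 * fnorm Tp ^ 2 ≤ s ∧ 0 ≤ s := by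
    by_cases hN2 : 2 ≤ N
    · have hD : (0:ℝ) < (N : ℝ) - 1 := by
        have : (2:ℝ) ≤ (N:ℝ) := by exact_mod_cast hN2
        linarith
      constructor
      · rw [hfn, hσ2, hs]
        have key2 : (1 - ρ^2) * finner Tp Tp ≤ 12 * (1 - ρ) := by
          have h1 : (0:ℝ) ≤ 1 - ρ^2 := by nlinarith
          nlinarith [mul_nonneg (sub_nonneg.mpr hTp6) h1, sq_nonneg (1 - ρ)]
        calc (1 - ρ^2) / ((N:ℝ) - 1) * finner Tp Tp
            = ((1 - ρ^2) * finner Tp Tp) / ((N:ℝ) - 1) := by ring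
          _ ≤ (12 * (1 - ρ)) / ((N:ℝ) - 1) := by gcongr
          _ = 12 / ((N:ℝ) - 1) * (1 - ρ) := by ring
      · rw [hs]
        have : (0:ℝ) ≤ 12 / ((N:ℝ) - 1) := by positivity
        nlinarith
    · have hNeq : N = 1 := by omega
      subst hNeq
      simp only [hσ2, hs, Nat.cast_one, sub_self, div_zero, zero_mul]
      exact ⟨le_refl 0, le_refl 0⟩
  have hcoe : ((Real.toNNReal (σ2 * fnorm Tp ^ 2)) : ℝ) ≤ s := by
    rw [Real.coe_toNNReal']
    exact max_le hvs.1 hvs.2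
  have hsq : Real.sqrt ((Real.toNNReal (σ2 * fnorm Tp ^ 2)) : ℝ) ≤ Real.sqrt s :=
    Real.sqrt_le_sqrt hcoe
  by_cases hs0 : Real.sqrt s = 0
  · rw [hs0] at hsq
    have h0 : Real.sqrt ((Real.toNNReal (σ2 * fnorm Tp ^ 2)) : ℝ) = 0 :=
      le_antisymm hsq (Real.sqrt_nonneg _)
    rw [h0, mul_zero]
    exact hρΔ.le
  · have hspos : 0 < Real.sqrt s := lt_of_le_of_ne (Real.sqrt_nonneg _) (Ne.symm hs0)
    calc ρ * Δ / Real.sqrt s * Real.sqrt ((Real.toNNReal (σ2 * fnorm Tp ^ 2)) : ℝ)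
        ≤ ρ * Δ / Real.sqrt s * Real.sqrt s := by
          apply mul_le_mul_of_nonneg_left hsq
          positivity
      _ = ρ * Δ := div_mul_cancel₀ _ hs0
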